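/- Let v, v' be two points in [N]^k with v' ≠ v, and construct v'' equal to v' in all coordinates except one coordinate j, where v''_j = v'_j + 1 if v'_j < N and v''_j = v'_j - 1 if v'_j = N (choosing j so that this changes dist(v, v''), which is always possible when N > 2). Then either every query covering {v, v'} covers {v, v''}, or every query covering {v, v''} covers {v, v'}. -/
import Mathlib


abbrev Pt (N k : ℕ) := Fin k → Fin N

def covers {N k : ℕ} (a b v : Pt N k) : Prop := ∀ i, a i ≤ v i ∧ v i ≤ b i

def l1 {N k : ℕ} (v w : Pt N k) : ℕ := ∑ i, ((v i : ℤ) - (w i : ℤ)).natAbs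

/-- Let `v''` agree with `v'` on all coordinates except `j`, where `v''_j = v'_j + 1` if
`v'_j < N` and `v''_j = v'_j - 1` if `v'_j = N`, chosen so that `dist(v, v'') ≠ dist(v, v')`.
Then either every query covering `{v, v'}` covers `{v, v''}`, or every query covering
`{v, v''}` covers `{v, v'}`. -/
theorem stmt6 (N k : ℕ) (hN : 2 < N) (v v' v'' : Pt N k) (hvv' : v ≠ v') (j : Fin k)
    (hagree : ∀ i, i ≠ j → v'' i = v' i)
    (hcase : ((v' j : ℕ) + 1 < N ∧ (v'' j : ℕ) = (v' j : ℕ) + 1) ∨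
             ((v' j : ℕ) + 1 = N ∧ (v'' j : ℕ) = (v' j : ℕ) - 1))
    (hd : l1 v v'' ≠ l1 v v') :
    (∀ a b : Pt N k, covers a b v → covers a b v' → covers a b v'') ∨
    (∀ a b : Pt N k, covers a b v → covers a b v'' → covers a b v') := by
  have hyN : (v' j : ℕ) < N := (v' j).isLt
  by_cases hmid : min (v j : ℕ) (v' j : ℕ) ≤ (v'' j : ℕ) ∧
      (v'' j : ℕ) ≤ max (v j : ℕ) (v' j : ℕ)
  · left
    intro a b hv hv' i
    by_cases hij : i = j
    · subst hij
      have h1 := (hv i)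
      have h2 := (hv' i)
      simp only [Fin.le_def] at h1 h2 ⊢
      omega
    · rw [hagree i hij]; exact hv' i
  · right
    intro a b hv hv'' i
    by_cases hij : i = j
    · subst hij
      have h1 := (hv i)
      have h2 := (hv'' i)
      simp only [Fin.le_def] at h1 h2 ⊢
      omega
    · rw [← hagree i hij]; exact hv'' i
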